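/- Suppose that in BB_2(R) the element e_1 is nonzero and has vanishing annihilator ideal in R (i.e., for r ∈ R, r·e_1 = 0 implies r = 0). Then A(1 − q0λ) = q1·x. If in addition e_1 and Y·e_1 are R-linearly independent in BB_2(R), then q0 − q0⁻¹ = −δ. -/

import Mathlib

namespace BMWB

inductive Gen (n : ℕ) : Type
  | X : Fin (n - 1) → Gen n
  | Xinv : Fin (n - 1) → Gen n
  | Y : 0 < n → Gen n
  | Yinv : 0 < n → Gen n

variable (R : Type) [CommRing R]

def fX {n : ℕ} (i : Fin (n - 1)) : FreeAlgebra R (Gen n) := FreeAlgebra.ι R (Gen.X i)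
def fXinv {n : ℕ} (i : Fin (n - 1)) : FreeAlgebra R (Gen n) := FreeAlgebra.ι R (Gen.Xinv i)
def fY {n : ℕ} (h : 0 < n) : FreeAlgebra R (Gen n) := FreeAlgebra.ι R (Gen.Y h)
def fYinv {n : ℕ} (h : 0 < n) : FreeAlgebra R (Gen n) := FreeAlgebra.ι R (Gen.Yinv h)
def fe {n : ℕ} (deli : R) (i : Fin (n - 1)) : FreeAlgebra R (Gen n) :=
  1 - deli • (fX R i - fXinv R i)

variable (lam lami deli q0 q1 A : R) (n : ℕ)

/-- The defining relations of the reduced Birman-Murakami-Wenzl algebra of Coxeter type B. -/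
inductive Rel : FreeAlgebra R (Gen n) → FreeAlgebra R (Gen n) → Prop
  | XXinv (i : Fin (n - 1)) : Rel (fX R i * fXinv R i) 1
  | XinvX (i : Fin (n - 1)) : Rel (fXinv R i * fX R i) 1
  | YYinv (h : 0 < n) : Rel (fY R h * fYinv R h) 1
  | YinvY (h : 0 < n) : Rel (fYinv R h * fY R h) 1
  | comm (i j : Fin (n - 1)) (h : (j : ℕ) + 1 < (i : ℕ)) :
      Rel (fX R i * fX R j) (fX R j * fX R i)
  | braid (i j : Fin (n - 1)) (h : (i : ℕ) + 1 = (j : ℕ)) :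
      Rel (fX R i * fX R j * fX R i) (fX R j * fX R i * fX R j)
  | Xe (i : Fin (n - 1)) : Rel (fX R i * fe R deli i) (lam • fe R deli i)
  | eX (i : Fin (n - 1)) : Rel (fe R deli i * fX R i) (lam • fe R deli i)
  | eXe (i j : Fin (n - 1)) (h : (j : ℕ) + 1 = (i : ℕ)) :
      Rel (fe R deli i * fX R j * fe R deli i) (lami • fe R deli i)
  | eXinve (i j : Fin (n - 1)) (h : (j : ℕ) + 1 = (i : ℕ)) :
      Rel (fe R deli i * fXinv R j * fe R deli i) (lam • fe R deli i)
  | bYXYX (h : 0 < n) (i : Fin (n - 1)) (hi : (i : ℕ) = 0) :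
      Rel (fX R i * fY R h * fX R i * fY R h) (fY R h * fX R i * fY R h * fX R i)
  | Ysq (h : 0 < n) : Rel (fY R h * fY R h) (q1 • fY R h + q0 • (1 : FreeAlgebra R (Gen n)))
  | YXYe (h : 0 < n) (i : Fin (n - 1)) (hi : (i : ℕ) = 0) :
      Rel (fY R h * fX R i * fY R h * fe R deli i) (fe R deli i)
  | Ycomm (h : 0 < n) (i : Fin (n - 1)) (hi : 0 < (i : ℕ)) :
      Rel (fY R h * fX R i) (fX R i * fY R h)
  | eYe (h : 0 < n) (i : Fin (n - 1)) (hi : (i : ℕ) = 0) :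
      Rel (fe R deli i * fY R h * fe R deli i) (A • fe R deli i)

/-- The reduced Birman-Murakami-Wenzl algebra of Coxeter type B, `BB_n(R)`,
presented by generators and relations. -/
abbrev BB : Type := RingQuot (Rel R lam lami deli q0 q1 A n)

noncomputable def mk : FreeAlgebra R (Gen n) →ₐ[R] BB R lam lami deli q0 q1 A n :=
  RingQuot.mkAlgHom R (Rel R lam lami deli q0 q1 A n)

/-- The generator `Y` (junk value `1` if `n = 0`). -/
noncomputable def YY : BB R lam lami deli q0 q1 A n :=
  if h : 0 < n then mk R lam lami deli q0 q1 A n (fY R h) else 1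

/-- The inverse of the generator `Y`. -/
noncomputable def YYi : BB R lam lami deli q0 q1 A n :=
  if h : 0 < n then mk R lam lami deli q0 q1 A n (fYinv R h) else 1

/-- The generator `X_i`, `1 ≤ i ≤ n-1` (junk value `1` out of range). -/
noncomputable def XX (i : ℕ) : BB R lam lami deli q0 q1 A n :=
  if h : i - 1 < n - 1 then mk R lam lami deli q0 q1 A n (fX R ⟨i - 1, h⟩) else 1

/-- The inverse `X_i⁻¹`. -/
noncomputable def XXi (i : ℕ) : BB R lam lami deli q0 q1 A n :=
  if h : i - 1 < n - 1 then mk R lam lami deli q0 q1 A n (fXinv R ⟨i - 1, h⟩) else 1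

/-- The element `e_i := 1 - δ⁻¹ (X_i - X_i⁻¹)`. -/
noncomputable def ee (i : ℕ) : BB R lam lami deli q0 q1 A n :=
  1 - deli • (XX R lam lami deli q0 q1 A n i - XXi R lam lami deli q0 q1 A n i)

/-- `Y_i := X_{i-1} ⋯ X_1 Y X_1⁻¹ ⋯ X_{i-1}⁻¹`. -/
noncomputable def Yn : ℕ → BB R lam lami deli q0 q1 A n
  | 0 => 1
  | 1 => YY R lam lami deli q0 q1 A n
  | (k + 2) => XX R lam lami deli q0 q1 A n (k + 1) * Yn (k + 1) * XXi R lam lami deli q0 q1 A n (k + 1)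

/-- `Y'_i := X_{i-1} ⋯ X_1 Y X_1 ⋯ X_{i-1}`. -/
noncomputable def Yp : ℕ → BB R lam lami deli q0 q1 A n
  | 0 => 1
  | 1 => YY R lam lami deli q0 q1 A n
  | (k + 2) => XX R lam lami deli q0 q1 A n (k + 1) * Yp (k + 1) * XX R lam lami deli q0 q1 A n (k + 1)

/-- The inverse of `Y'_i`. -/
noncomputable def Ypi : ℕ → BB R lam lami deli q0 q1 A n
  | 0 => 1
  | 1 => YYi R lam lami deli q0 q1 A n
  | (k + 2) => XXi R lam lami deli q0 q1 A n (k + 1) * Ypi (k + 1) * XXi R lam lami deli q0 q1 A n (k + 1)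

/-- The set of the images of the generators (and their inverses) of `BB_{m+1}` inside `BB_n`.
Its `Algebra.adjoin` is the image of the canonical algebra homomorphism `BB_{m+1} → BB_n`. -/
noncomputable def genSet (m : ℕ) : Set (BB R lam lami deli q0 q1 A n) :=
  {a | a = YY R lam lami deli q0 q1 A n ∨ a = YYi R lam lami deli q0 q1 A n ∨
    ∃ i, 1 ≤ i ∧ i ≤ m ∧ (a = XX R lam lami deli q0 q1 A n i ∨ a = XXi R lam lami deli q0 q1 A n i)}

/-- The image of the canonical algebra homomorphism `BB_{m+1}(R) → BB_n(R)`, realized as the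
subalgebra generated by the images of the generators `Y, Y⁻¹, X_1, …, X_m` (and inverses). -/
noncomputable def sub (m : ℕ) : Subalgebra R (BB R lam lami deli q0 q1 A n) :=
  Algebra.adjoin R (genSet R lam lami deli q0 q1 A n m)

/-- `X(i,j) = X_i X_{i+1} ⋯ X_j`. -/
noncomputable def Xprod (i j : ℕ) : BB R lam lami deli q0 q1 A n :=
  ((List.range (j + 1 - i)).map (fun k => XX R lam lami deli q0 q1 A n (i + k))).prod

/-- `E(i,j) = e_i e_{i+2} ⋯ e_j`. -/
noncomputable def Eprod (i j : ℕ) : BB R lam lami deli q0 q1 A n :=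
  ((List.range ((j - i) / 2 + 1)).map (fun k => ee R lam lami deli q0 q1 A n (i + 2 * k))).prod

/-- `H_1 = e_1`, `H_{m+1} = e_{m+1} X(m+2, 2m+1) X(m+1, 2m) H_m`. -/
noncomputable def H : ℕ → BB R lam lami deli q0 q1 A n
  | 0 => 1
  | 1 => ee R lam lami deli q0 q1 A n 1
  | (k + 2) => ee R lam lami deli q0 q1 A n (k + 2) *
      Xprod R lam lami deli q0 q1 A n (k + 3) (2 * k + 3) *
      Xprod R lam lami deli q0 q1 A n (k + 2) (2 * k + 2) * H (k + 1)

/-- Nondegeneracy of `BB_2(R)` forces relations among the parameters: `A(1−q0λ) = q1 x`,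
and if moreover `e_1` and `Y e_1` are linearly independent, `q0 − q0⁻¹ = −δ` (Lemma 5 / 6). -/
theorem BB_parameter_constraints (R : Type) [CommRing R] [IsDomain R]
    (q qi lam lami del deli q0 q0i q1 A x : R)
    (hq : q * qi = 1) (hlam : lam * lami = 1) (hdel : del * deli = 1) (hq0u : q0 * q0i = 1)
    (hdelta : del = q - qi) (hx : x * del = del - lam + lami)
    (h1 : ee R lam lami deli q0 q1 A 2 1 ≠ 0)
    (h2 : ∀ r : R, r • ee R lam lami deli q0 q1 A 2 1 = 0 → r = 0) :
    A * (1 - q0 * lam) = q1 * x ∧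
    (LinearIndependent R ![ee R lam lami deli q0 q1 A 2 1, YY R lam lami deli q0 q1 A 2 * ee R lam lami deli q0 q1 A 2 1] →
      q0 - q0i = -del) := by

  set E : BB R lam lami deli q0 q1 A 2 := ee R lam lami deli q0 q1 A 2 1 with hEdef'
  set Yv : BB R lam lami deli q0 q1 A 2 := YY R lam lami deli q0 q1 A 2 with hYv
  set Xv : BB R lam lami deli q0 q1 A 2 := XX R lam lami deli q0 q1 A 2 1 with hXv
  set Xiv : BB R lam lami deli q0 q1 A 2 := XXi R lam lami deli q0 q1 A 2 1 with hXiv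
  set Yiv : BB R lam lami deli q0 q1 A 2 := YYi R lam lami deli q0 q1 A 2 with hYiv
  have h02 : (0:ℕ) < 2 := by norm_num
  have h01 : (0:ℕ) < 1 := by norm_num
  set i0 : Fin (2-1) := ⟨0, by norm_num⟩ with hi0
  have hfX : Xv = mk R lam lami deli q0 q1 A 2 (fX R i0) := by
    rw [hXv, XX, dif_pos h01]
  have hfXi : Xiv = mk R lam lami deli q0 q1 A 2 (fXinv R i0) := by
    rw [hXiv, XXi, dif_pos h01]
  have hfY : Yv = mk R lam lami deli q0 q1 A 2 (fY R h02) := by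
    rw [hYv, YY, dif_pos h02]
  have hfYi : Yiv = mk R lam lami deli q0 q1 A 2 (fYinv R h02) := by
    rw [hYiv, YYi, dif_pos h02]
  have hfe : E = mk R lam lami deli q0 q1 A 2 (fe R deli i0) := by
    rw [hEdef', ee, fe, map_sub, map_one, map_smul, map_sub, ← hfX, ← hfXi]
  have rel := fun {a b} (h : Rel R lam lami deli q0 q1 A 2 a b) =>
    RingQuot.mkAlgHom_rel R h
  have hXXi : Xv * Xiv = 1 := by
    have := rel (Rel.XXinv i0)
    rw [map_mul, map_one] at this
    rw [hfX, hfXi]; exact this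
  have hXiX : Xiv * Xv = 1 := by
    have := rel (Rel.XinvX i0)
    rw [map_mul, map_one] at this
    rw [hfX, hfXi]; exact this
  have hYYi : Yv * Yiv = 1 := by
    have := rel (Rel.YYinv h02)
    rw [map_mul, map_one] at this
    rw [hfY, hfYi]; exact this
  have hYiY : Yiv * Yv = 1 := by
    have := rel (Rel.YinvY h02)
    rw [map_mul, map_one] at this
    rw [hfY, hfYi]; exact this
  have hXe : Xv * E = lam • E := by
    have := rel (Rel.Xe i0)
    rw [map_mul, map_smul] at this
    rw [hfX, hfe]; exact this
  have heX : E * Xv = lam • E := by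
    have := rel (Rel.eX i0)
    rw [map_mul, map_smul] at this
    rw [hfX, hfe]; exact this
  have hYsq : Yv * Yv = q1 • Yv + q0 • 1 := by
    have := rel (Rel.Ysq h02)
    rw [map_mul, map_add, map_smul, map_smul, map_one] at this
    rw [hfY]; exact this
  have hYXYe : Yv * Xv * Yv * E = E := by
    have := rel (Rel.YXYe h02 i0 rfl)
    rw [map_mul, map_mul, map_mul] at this
    rw [hfY, hfX, hfe]; exact this
  have heYe : E * Yv * E = A • E := by
    have := rel (Rel.eYe h02 i0 rfl)
    rw [map_mul, map_mul, map_smul] at this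
    rw [hfY, hfe]; exact this
  -- derived relations
  have hXie : Xiv * E = lami • E := by
    have h1' : E = lam • (Xiv * E) := by
      calc E = (Xiv * Xv) * E := by rw [hXiX, one_mul]
        _ = Xiv * (Xv * E) := by rw [mul_assoc]
        _ = Xiv * (lam • E) := by rw [hXe]
        _ = lam • (Xiv * E) := mul_smul_comm lam Xiv E
    calc Xiv * E = (lami * lam) • (Xiv * E) := by rw [mul_comm, hlam, one_smul]
      _ = lami • (lam • (Xiv * E)) := mul_smul _ _ _
      _ = lami • E := by rw [← h1']
  have hxval : x = 1 - deli * (lam - lami) := by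
    linear_combination deli * hx + (1 - x) * hdel
  have hEdef : E = 1 - deli • (Xv - Xiv) := rfl
  have heE : E * E = x • E := by
    calc E * E = (1 - deli • (Xv - Xiv)) * E := by rw [← hEdef]
      _ = E - deli • (Xv * E - Xiv * E) := by
          rw [sub_mul, one_mul, smul_mul_assoc, sub_mul]
      _ = E - deli • (lam • E - lami • E) := by rw [hXe, hXie]
      _ = (1 - deli * (lam - lami)) • E := by module
      _ = x • E := by rw [← hxval]
  have hYinv : Yiv = q0i • Yv - (q0i * q1) • 1 := by
    have hL : (q0i • Yv - (q0i * q1) • (1 : BB R lam lami deli q0 q1 A 2)) * Yv = 1 := by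
      calc (q0i • Yv - (q0i * q1) • 1) * Yv
          = q0i • (Yv * Yv) - (q0i * q1) • Yv := by
            rw [sub_mul, smul_mul_assoc, smul_mul_assoc, one_mul]
        _ = q0i • (q1 • Yv + q0 • 1) - (q0i * q1) • Yv := by rw [hYsq]
        _ = (q0i * q0) • 1 := by module
        _ = 1 := by rw [mul_comm, hq0u, one_smul]
    calc Yiv = 1 * Yiv := (one_mul _).symm
      _ = ((q0i • Yv - (q0i * q1) • 1) * Yv) * Yiv := by rw [hL]
      _ = (q0i • Yv - (q0i * q1) • 1) * (Yv * Yiv) := by rw [mul_assoc]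
      _ = q0i • Yv - (q0i * q1) • 1 := by rw [hYYi, mul_one]
  have hXYe : Xv * (Yv * E) = Yiv * E := by
    calc Xv * (Yv * E) = (Yiv * Yv) * (Xv * (Yv * E)) := by rw [hYiY, one_mul]
      _ = Yiv * (Yv * Xv * Yv * E) := by simp only [mul_assoc]
      _ = Yiv * E := by rw [hYXYe]
  have hEYE : E * (Yv * E) = A • E := by rw [← mul_assoc, heYe]
  -- Part 1
  have c1 : E * (Xv * (Yv * E)) = (lam * A) • E := by
    calc E * (Xv * (Yv * E)) = (E * Xv) * (Yv * E) := by rw [mul_assoc]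
      _ = (lam • E) * (Yv * E) := by rw [heX]
      _ = lam • (E * (Yv * E)) := smul_mul_assoc _ _ _
      _ = lam • (A • E) := by rw [hEYE]
      _ = (lam * A) • E := smul_smul _ _ _
  have c2 : E * (Yiv * E) = (q0i * A - q0i * q1 * x) • E := by
    calc E * (Yiv * E) = E * ((q0i • Yv - (q0i * q1) • 1) * E) := by rw [hYinv]
      _ = E * (q0i • (Yv * E) - (q0i * q1) • E) := by
          rw [sub_mul, smul_mul_assoc, smul_mul_assoc, one_mul]
      _ = q0i • (E * (Yv * E)) - (q0i * q1) • (E * E) := by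
          rw [mul_sub, mul_smul_comm, mul_smul_comm]
      _ = q0i • (A • E) - (q0i * q1) • (x • E) := by rw [hEYE, heE]
      _ = (q0i * A - q0i * q1 * x) • E := by module
  have key1 : (lam * A - (q0i * A - q0i * q1 * x)) • E = 0 := by
    have hc : (lam * A) • E = (q0i * A - q0i * q1 * x) • E := by
      rw [← c1, ← c2, hXYe]
    linear_combination (norm := module) hc
  have A1 : lam * A - (q0i * A - q0i * q1 * x) = 0 := h2 _ key1
  have goal1 : A * (1 - q0 * lam) = q1 * x := by
    linear_combination (-q0) * A1 + (q1 * x - A) * hq0u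
  -- Part 2
  have c3 : Xiv * (Yiv * E) = Yv * E := by
    calc Xiv * (Yiv * E) = Xiv * (Xv * (Yv * E)) := by rw [hXYe]
      _ = (Xiv * Xv) * (Yv * E) := (mul_assoc _ _ _).symm
      _ = Yv * E := by rw [hXiX, one_mul]
  have hscal : q0 * (q0i * q1 * lami) = q1 * lami := by
    linear_combination q1 * lami * hq0u
  have e1 : q0i • (Xiv * (Yv * E)) = Yv * E + (q0i * q1 * lami) • E := by
    have : Yv * E = q0i • (Xiv * (Yv * E)) - (q0i * q1 * lami) • E := by
      calc Yv * E = Xiv * (Yiv * E) := c3.symm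
        _ = Xiv * ((q0i • Yv - (q0i * q1) • 1) * E) := by rw [hYinv]
        _ = Xiv * (q0i • (Yv * E) - (q0i * q1) • E) := by
            rw [sub_mul, smul_mul_assoc, smul_mul_assoc, one_mul]
        _ = q0i • (Xiv * (Yv * E)) - (q0i * q1) • (Xiv * E) := by
            rw [mul_sub, mul_smul_comm, mul_smul_comm]
        _ = q0i • (Xiv * (Yv * E)) - (q0i * q1) • (lami • E) := by rw [hXie]
        _ = q0i • (Xiv * (Yv * E)) - (q0i * q1 * lami) • E := by rw [smul_smul]
    exact (eq_sub_iff_add_eq.mp this).symm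
  have c4 : Xiv * (Yv * E) = q0 • (Yv * E) + (q1 * lami) • E := by
    calc Xiv * (Yv * E) = (q0 * q0i) • (Xiv * (Yv * E)) := by rw [hq0u, one_smul]
      _ = q0 • (q0i • (Xiv * (Yv * E))) := mul_smul _ _ _
      _ = q0 • (Yv * E + (q0i * q1 * lami) • E) := by rw [e1]
      _ = q0 • (Yv * E) + (q0 * (q0i * q1 * lami)) • E := by module
      _ = q0 • (Yv * E) + (q1 * lami) • E := by rw [hscal]
  have c5 : Xv * (Yv * E) = q0i • (Yv * E) - (q0i * q1) • E := by
    rw [hXYe, hYinv, sub_mul, smul_mul_assoc, smul_mul_assoc, one_mul]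
  have c6 : (Xv - Xiv) * (Yv * E) = del • (Yv * E) - (del * A) • E := by
    have h7 : deli • (Xv - Xiv) = 1 - E := by rw [hEdef]; module
    have hXmXi : Xv - Xiv = del • ((1 : BB R lam lami deli q0 q1 A 2) - E) := by
      calc Xv - Xiv = (del * deli) • (Xv - Xiv) := by rw [hdel, one_smul]
        _ = del • (deli • (Xv - Xiv)) := mul_smul _ _ _
        _ = del • (1 - E) := by rw [h7]
    rw [hXmXi, smul_mul_assoc, sub_mul, one_mul, hEYE]; module
  have comb : (del * A - q0i * q1 - q1 * lami) • E + (q0i - q0 - del) • (Yv * E) = 0 := by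
    have h' : Xv * (Yv * E) - Xiv * (Yv * E) = del • (Yv * E) - (del * A) • E := by
      rw [← sub_mul]; exact c6
    rw [c4, c5] at h'
    linear_combination (norm := module) h'
  refine ⟨goal1, fun hli => ?_⟩
  have hz := Fintype.linearIndependent_iff.mp hli
      ![del * A - q0i * q1 - q1 * lami, q0i - q0 - del]
      (by simpa [Fin.sum_univ_two] using comb) 1
  simp only [Matrix.cons_val_one, Matrix.head_cons, Matrix.cons_val_zero] at hz
  linear_combination -hz

end BMWB
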